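/- arXiv:2101.01110 — 2 statements merged into one kernel-verified Lean document; each statement's English description precedes it below -/
import Mathlib

section
/- Let x, r, a be real numbers with 0 < x < 1, r > 1, a > 0, let i, j ≥ 1 be integers, and fix a sign ϵ ∈ {+1, −1}. Then there exists ρ > 0 such that for every complex number z with |z| < ρ: if i ≤ j then f_{1,i}(z; a) · f_{j,i}(x^{ϵ(j+1)} z; a) = f_{j+1,i}(x^{ϵ j} z; a) · Δ_1(x^{ϵ i} z), while if j < i then f_{1,i}(z; a) · f_{j,i}(x^{ϵ(j+1)} z; a) = f_{j+1,i}(x^{ϵ j} z; a). (This is relation (4.6) of Lemma 4.5.) -/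
/-- The q-integer `[n]_x = (x^n - x^{-n})/(x - x^{-1})`, with real powers of `x`. -/
noncomputable def qint (x n : ℝ) : ℝ := (x ^ n - x ^ (-n)) / (x - x⁻¹)

/-- The `m`-th coefficient of the exponent series defining the structure function
`f_{i,j}(z;a)` of the deformed W-superalgebra `W_{q,t}(A(M,N))`. -/
noncomputable def fCoeff (x r a : ℝ) (i j : ℤ) (m : ℕ) : ℝ :=
  (1 / (m : ℝ)) *
    (qint x ((r - 1) * m) * qint x (r * m) * qint x ((min i j : ℤ) * m) *
      qint x ((a - (max i j : ℤ)) * m)) /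
    (qint x (m : ℝ) * qint x (a * m)) * (x - x⁻¹) ^ 2

/-- The `m`-th term of the exponent series of `f_{i,j}(z;a)` (including the minus sign),
indexed so that `m : ℕ` corresponds to the power `z^(m+1)`. -/
noncomputable def fTerm (x r a : ℝ) (i j : ℤ) (z : ℂ) (m : ℕ) : ℂ :=
  -((fCoeff x r a i j (m + 1) : ℝ) : ℂ) * z ^ (m + 1)

/-- The structure function
`f_{i,j}(z;a) = exp(-Σ_{m≥1} c_m z^m)` of `W_{q,t}(A(M,N))`. -/
noncomputable def fFun (x r a : ℝ) (i j : ℤ) (z : ℂ) : ℂ :=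
  Complex.exp (∑' m : ℕ, fTerm x r a i j z m)

/-- The real power `x^t`, regarded as a complex number. -/
noncomputable def xp (x t : ℝ) : ℂ := ((x ^ t : ℝ) : ℂ)

/-- The function `Δ_i(z) = (1 - x^{2r-i}z)(1 - x^{-2r+i}z)/((1 - x^i z)(1 - x^{-i}z))`. -/
noncomputable def Delta (x r : ℝ) (i : ℝ) (z : ℂ) : ℂ :=
  ((1 - xp x (2 * r - i) * z) * (1 - xp x (-(2 * r) + i) * z)) /
    ((1 - xp x i * z) * (1 - xp x (-i) * z))

/-! ### Auxiliary basic lemmas -/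

lemma hcpos {x : ℝ} (hx0 : 0 < x) (hx1 : x < 1) : 0 < x⁻¹ - x := by
  have : 1 < x⁻¹ := (one_lt_inv₀ hx0).mpr hx1
  nlinarith

lemma qint_alt (x s : ℝ) : qint x s = (x ^ (-s) - x ^ s) / (x⁻¹ - x) := by
  unfold qint
  rw [← neg_sub (x ^ (-s)) (x ^ s), ← neg_sub x⁻¹ x, neg_div_neg_eq]

lemma abs_qint_le {x : ℝ} (hx0 : 0 < x) (hx1 : x < 1) (s : ℝ) :
    |qint x s| ≤ x ^ (-|s|) / (x⁻¹ - x) := by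
  have hc := hcpos hx0 hx1
  rw [qint_alt, abs_div, abs_of_pos hc]
  rw [div_le_div_iff_of_pos_right hc]
  have h1 : x ^ s ≤ x ^ (-|s|) := by
    apply Real.rpow_le_rpow_of_exponent_ge hx0 hx1.le
    have := neg_abs_le s; linarith
  have h2 : x ^ (-s) ≤ x ^ (-|s|) := by
    apply Real.rpow_le_rpow_of_exponent_ge hx0 hx1.le
    have := le_abs_self s; linarith
  have h3 : (0:ℝ) ≤ x ^ s := (Real.rpow_pos_of_pos hx0 _).le
  have h4 : (0:ℝ) ≤ x ^ (-s) := (Real.rpow_pos_of_pos hx0 _).le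
  rw [abs_le]; constructor <;> nlinarith

lemma one_sub_pow_pos {x : ℝ} (hx0 : 0 < x) (hx1 : x < 1) {t : ℝ} (ht : 0 < t) :
    0 < 1 - x ^ (2*t) := by
  have : x ^ (2*t) < 1 := Real.rpow_lt_one hx0.le hx1 (by positivity)
  linarith

lemma qint_lb {x : ℝ} (hx0 : 0 < x) (hx1 : x < 1) {s t : ℝ} (ht : 0 < t) (hts : t ≤ s) :
    (1 - x ^ (2*t)) / (x⁻¹ - x) ≤ qint x s := by
  have hc := hcpos hx0 hx1
  rw [qint_alt]
  rw [div_le_div_iff_of_pos_right hc]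
  have hxs : x ^ s ≤ x ^ (2*t) * x ^ (-s) := by
    rw [← Real.rpow_add hx0]
    apply Real.rpow_le_rpow_of_exponent_ge hx0 hx1.le; linarith
  have hxs2 : (1:ℝ) ≤ x ^ (-s) := by
    have := Real.rpow_le_rpow_of_exponent_ge hx0 hx1.le (show -s ≤ 0 by linarith)
    rwa [Real.rpow_zero] at this
  have h2t : x ^ (2*t) < 1 := Real.rpow_lt_one hx0.le hx1 (by positivity)
  have h2tpos : (0:ℝ) ≤ x ^ (2*t) := (Real.rpow_pos_of_pos hx0 _).le
  nlinarith

lemma qint_pos {x : ℝ} (hx0 : 0 < x) (hx1 : x < 1) {s t : ℝ} (ht : 0 < t) (hts : t ≤ s) :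
    0 < qint x s := by
  refine lt_of_lt_of_le ?_ (qint_lb hx0 hx1 ht hts)
  exact div_pos (one_sub_pow_pos hx0 hx1 ht) (hcpos hx0 hx1)

lemma algAux (A1 A2 A3 A4 G1 G2 c N : ℝ) (hc : c ≠ 0) (hG1 : G1 ≠ 0) (hG2 : G2 ≠ 0)
    (hN : N ≠ 0) :
    1/N * (A1/c * (A2/c) * (A3/c) * (A4/c)) / (G1/c * (G2/c)) * c^2
      = 1/N * (A1*A2*A3*A4) * (G1*G2)⁻¹ := by
  field_simp

lemma fCoeff_bound (x r a : ℝ) (hx0 : 0 < x) (hx1 : x < 1) (hr : 1 < r) (ha : 0 < a)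
    (i j : ℤ) (hi : 1 ≤ i) (hj : 1 ≤ j) (n : ℕ) (hn : 1 ≤ n) :
    |fCoeff x r a i j n| ≤
      ((1 - x^(2*(1:ℝ))) * (1 - x^(2*a)))⁻¹ *
        (x ^ (-(|r-1| + |r| + |((min i j : ℤ):ℝ)| + |a - ((max i j : ℤ):ℝ)|))) ^ n := by
  have hc := hcpos hx0 hx1
  have hN : (0:ℝ) < (n:ℝ) := by exact_mod_cast hn
  have hN1 : (1:ℝ) ≤ (n:ℝ) := by exact_mod_cast hn
  set c := x⁻¹ - x with hcdef
  set s1 := |r - 1| with hs1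
  set s2 := |r| with hs2
  set mi := |((min i j : ℤ):ℝ)| with hmi
  set ma := |a - ((max i j : ℤ):ℝ)| with hma
  set K := s1 + s2 + mi + ma with hKdef
  set G1 := 1 - x^(2*(1:ℝ)) with hG1def
  set G2 := 1 - x^(2*a) with hG2def
  have hG1 : 0 < G1 := one_sub_pow_pos hx0 hx1 one_pos
  have hG2 : 0 < G2 := one_sub_pow_pos hx0 hx1 ha
  have hq5 : G1/c ≤ qint x (n:ℝ) := qint_lb hx0 hx1 one_pos hN1
  have hq6 : G2/c ≤ qint x (a*(n:ℝ)) :=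
    qint_lb hx0 hx1 ha (le_mul_of_one_le_right ha.le hN1)
  have hq5p : 0 < qint x (n:ℝ) := qint_pos hx0 hx1 one_pos hN1
  have hq6p : 0 < qint x (a*(n:ℝ)) := qint_pos hx0 hx1 ha (le_mul_of_one_le_right ha.le hN1)
  have b1 : |qint x ((r-1)*(n:ℝ))| ≤ x ^ (-(s1*(n:ℝ))) / c := by
    have h := abs_qint_le hx0 hx1 ((r-1)*(n:ℝ))
    rwa [abs_mul, Nat.abs_cast, ← hs1] at h
  have b2 : |qint x (r*(n:ℝ))| ≤ x ^ (-(s2*(n:ℝ))) / c := by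
    have h := abs_qint_le hx0 hx1 (r*(n:ℝ))
    rwa [abs_mul, Nat.abs_cast, ← hs2] at h
  have b3 : |qint x (((min i j : ℤ):ℝ)*(n:ℝ))| ≤ x ^ (-(mi*(n:ℝ))) / c := by
    have h := abs_qint_le hx0 hx1 (((min i j : ℤ):ℝ)*(n:ℝ))
    rwa [abs_mul, Nat.abs_cast, ← hmi] at h
  have b4 : |qint x ((a - ((max i j : ℤ):ℝ))*(n:ℝ))| ≤ x ^ (-(ma*(n:ℝ))) / c := by
    have h := abs_qint_le hx0 hx1 ((a - ((max i j : ℤ):ℝ))*(n:ℝ))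
    rwa [abs_mul, Nat.abs_cast, ← hma] at h
  have habs : |fCoeff x r a i j n| = 1/(n:ℝ) *
      (|qint x ((r-1)*(n:ℝ))| * |qint x (r*(n:ℝ))| * |qint x (((min i j : ℤ):ℝ)*(n:ℝ))| *
        |qint x ((a - ((max i j : ℤ):ℝ))*(n:ℝ))|) /
      (qint x (n:ℝ) * qint x (a*(n:ℝ))) * c^2 := by
    unfold fCoeff
    simp only [abs_mul, abs_div, abs_pow, abs_one, Nat.abs_cast]
    rw [abs_of_pos hq5p, abs_of_pos hq6p, abs_sub_comm x x⁻¹, abs_of_pos hc]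
  rw [habs]
  have step1 : 1/(n:ℝ) *
      (|qint x ((r-1)*(n:ℝ))| * |qint x (r*(n:ℝ))| * |qint x (((min i j : ℤ):ℝ)*(n:ℝ))| *
        |qint x ((a - ((max i j : ℤ):ℝ))*(n:ℝ))|) /
      (qint x (n:ℝ) * qint x (a*(n:ℝ))) * c^2
      ≤ 1/(n:ℝ) *
      ((x ^ (-(s1*(n:ℝ))) / c) * (x ^ (-(s2*(n:ℝ))) / c) * (x ^ (-(mi*(n:ℝ))) / c) *
        (x ^ (-(ma*(n:ℝ))) / c)) /
      ((G1/c) * (G2/c)) * c^2 := by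
    have hd1 : 0 < (G1/c) * (G2/c) := by positivity
    gcongr <;> first
      | exact mul_pos (div_pos hG1 hc) (div_pos hG2 hc)
      | exact mul_le_mul hq5 hq6 (div_pos hG2 hc).le hq5p.le
      | positivity
  refine step1.trans ?_
  rw [algAux _ _ _ _ _ _ _ _ hc.ne' hG1.ne' hG2.ne' hN.ne']
  have hmerge : x ^ (-(s1*(n:ℝ))) * x ^ (-(s2*(n:ℝ))) * x ^ (-(mi*(n:ℝ))) * x ^ (-(ma*(n:ℝ)))
      = (x ^ (-K)) ^ n := by
    rw [← Real.rpow_add hx0, ← Real.rpow_add hx0, ← Real.rpow_add hx0,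
      ← Real.rpow_natCast (x ^ (-K)) n, ← Real.rpow_mul hx0.le]
    congr 1
    rw [hKdef]; ring
  rw [hmerge]
  have hfin : (0:ℝ) ≤ (x ^ (-K)) ^ n * (G1*G2)⁻¹ := by positivity
  have h1n : 1/(n:ℝ) ≤ 1 := by
    rw [div_le_one hN]; exact hN1
  calc 1/(n:ℝ) * ((x ^ (-K)) ^ n) * (G1*G2)⁻¹ = 1/(n:ℝ) * ((x ^ (-K)) ^ n * (G1*G2)⁻¹) := by ring
    _ ≤ 1 * ((x ^ (-K)) ^ n * (G1*G2)⁻¹) := mul_le_mul_of_nonneg_right h1n hfin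
    _ = (G1*G2)⁻¹ * (x ^ (-K)) ^ n := by ring

lemma summable_fTerm (x r a : ℝ) (hx0 : 0 < x) (hx1 : x < 1) (hr : 1 < r) (ha : 0 < a)
    (i j : ℤ) (hi : 1 ≤ i) (hj : 1 ≤ j) :
    ∃ ρ : ℝ, 0 < ρ ∧ ∀ z : ℂ, ‖z‖ < ρ → Summable (fTerm x r a i j z) := by
  set K := |r-1| + |r| + |((min i j : ℤ):ℝ)| + |a - ((max i j : ℤ):ℝ)| with hK
  set D := ((1 - x^(2*(1:ℝ))) * (1 - x^(2*a)))⁻¹ with hD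
  have hDpos : 0 < D := by
    rw [hD]
    exact inv_pos.mpr (mul_pos (one_sub_pow_pos hx0 hx1 one_pos) (one_sub_pow_pos hx0 hx1 ha))
  refine ⟨x ^ K, Real.rpow_pos_of_pos hx0 _, fun z hz => ?_⟩
  set t := x ^ (-K) * ‖z‖ with ht
  have ht0 : 0 ≤ t := by positivity
  have ht1 : t < 1 := by
    have h := mul_lt_mul_of_pos_left hz (Real.rpow_pos_of_pos hx0 (-K))
    rwa [← Real.rpow_add hx0, neg_add_cancel, Real.rpow_zero] at h
  apply Summable.of_norm_bounded (g := fun m : ℕ => (D*t) * t^m)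
  · exact (summable_geometric_of_lt_one ht0 ht1).mul_left _
  · intro m
    have hb := fCoeff_bound x r a hx0 hx1 hr ha i j hi hj (m+1) (Nat.le_add_left 1 m)
    have hnorm : ‖fTerm x r a i j z m‖ = |fCoeff x r a i j (m+1)| * ‖z‖^(m+1) := by
      unfold fTerm
      rw [norm_mul, norm_neg, Complex.norm_real, norm_pow, Real.norm_eq_abs]
    rw [hnorm]
    calc |fCoeff x r a i j (m+1)| * ‖z‖^(m+1)
        ≤ (D * (x ^ (-K)) ^ (m+1)) * ‖z‖^(m+1) := by
          apply mul_le_mul_of_nonneg_right _ (by positivity)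
          exact hb
      _ = (D*t) * t^m := by rw [ht, mul_pow]; ring
lemma hasSum_log (u : ℂ) (hu : ‖u‖ < 1) :
    HasSum (fun m : ℕ => u^(m+1)/((m:ℂ)+1)) (-Complex.log (1-u)) := by
  have h := Complex.hasSum_taylorSeries_neg_log hu
  have h2 := (hasSum_nat_add_iff' (f := fun n : ℕ => u^n/(n:ℂ)) 1).mpr h
  simp only [Finset.sum_range_one, pow_zero, Nat.cast_zero, div_zero, sub_zero] at h2
  convert h2 using 2 with m
  case e'_3 => rfl
  case e'_5 =>
  push_cast
  ring

lemma xp_add {x : ℝ} (hx0 : 0 < x) (s t : ℝ) : xp x (s+t) = xp x s * xp x t := by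
  unfold xp
  rw [Real.rpow_add hx0]
  push_cast
  ring

lemma xp_pow {x : ℝ} (hx0 : 0 < x) (t : ℝ) (N : ℕ) :
    (xp x t) ^ N = ((x ^ (t * (N:ℝ)) : ℝ) : ℂ) := by
  unfold xp
  rw [← Complex.ofReal_pow]
  congr 1
  rw [Real.rpow_mul hx0.le, Real.rpow_natCast]

lemma xp_norm {x : ℝ} (hx0 : 0 < x) (t : ℝ) : ‖xp x t‖ = x ^ t := by
  unfold xp
  rw [Complex.norm_real, Real.norm_eq_abs, abs_of_pos (Real.rpow_pos_of_pos hx0 t)]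

section KeyAlg
variable (U A I J R d N : ℝ)

lemma keyAlg1 (hU : U ≠ 0) (hA : A ≠ 0) (hI : I ≠ 0) (hJ : J ≠ 0)
    (hR : R ≠ 0) (hd : d ≠ 0) (hN : N ≠ 0)
    (k1 : U - U⁻¹ ≠ 0) (k2 : A - A⁻¹ ≠ 0) :
    1/N * ( (R*U⁻¹ - R⁻¹*U)/d * ((R-R⁻¹)/d) * ((U-U⁻¹)/d) * ((A*I⁻¹-A⁻¹*I)/d) ) /
        ( (U-U⁻¹)/d * ((A-A⁻¹)/d) ) * d^2
      + 1/N * ( (R*U⁻¹ - R⁻¹*U)/d * ((R-R⁻¹)/d) * ((I-I⁻¹)/d) * ((A*J⁻¹-A⁻¹*J)/d) ) /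
        ( (U-U⁻¹)/d * ((A-A⁻¹)/d) ) * d^2 * (J*U)
      - 1/N * ( (R*U⁻¹ - R⁻¹*U)/d * ((R-R⁻¹)/d) * ((I-I⁻¹)/d) * ((A*J⁻¹*U⁻¹-A⁻¹*J*U)/d) ) /
        ( (U-U⁻¹)/d * ((A-A⁻¹)/d) ) * d^2 * J
    = 1/N * (R*R*U⁻¹*I + R⁻¹*R⁻¹*U*I - U*I - U⁻¹*I) := by
  have hden : (U-U⁻¹)/d * ((A-A⁻¹)/d) ≠ 0 :=
    mul_ne_zero (div_ne_zero k1 hd) (div_ne_zero k2 hd)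
  have inner : (U-U⁻¹)/d*((A*I⁻¹-A⁻¹*I)/d) + (I-I⁻¹)/d*((A*J⁻¹-A⁻¹*J)/d)*(J*U)
      - (I-I⁻¹)/d*((A*J⁻¹*U⁻¹-A⁻¹*J*U)/d)*J = I*((U-U⁻¹)/d*((A-A⁻¹)/d)) := by
    field_simp
    ring
  have big : 1/N * ( (R*U⁻¹ - R⁻¹*U)/d * ((R-R⁻¹)/d) * ((U-U⁻¹)/d) * ((A*I⁻¹-A⁻¹*I)/d) ) /
        ( (U-U⁻¹)/d * ((A-A⁻¹)/d) ) * d^2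
      + 1/N * ( (R*U⁻¹ - R⁻¹*U)/d * ((R-R⁻¹)/d) * ((I-I⁻¹)/d) * ((A*J⁻¹-A⁻¹*J)/d) ) /
        ( (U-U⁻¹)/d * ((A-A⁻¹)/d) ) * d^2 * (J*U)
      - 1/N * ( (R*U⁻¹ - R⁻¹*U)/d * ((R-R⁻¹)/d) * ((I-I⁻¹)/d) * ((A*J⁻¹*U⁻¹-A⁻¹*J*U)/d) ) /
        ( (U-U⁻¹)/d * ((A-A⁻¹)/d) ) * d^2 * J
      = 1/N*d^2*((R*U⁻¹-R⁻¹*U)/d*((R-R⁻¹)/d))*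
        (((U-U⁻¹)/d*((A*I⁻¹-A⁻¹*I)/d) + (I-I⁻¹)/d*((A*J⁻¹-A⁻¹*J)/d)*(J*U)
          - (I-I⁻¹)/d*((A*J⁻¹*U⁻¹-A⁻¹*J*U)/d)*J) / ( (U-U⁻¹)/d * ((A-A⁻¹)/d) )) := by
    ring
  rw [big, inner, mul_div_cancel_right₀ I hden]
  field_simp
  ring

lemma keyAlg1' (hU : U ≠ 0) (hA : A ≠ 0) (hI : I ≠ 0) (hJ : J ≠ 0)
    (hR : R ≠ 0) (hd : d ≠ 0) (hN : N ≠ 0)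
    (k1 : U - U⁻¹ ≠ 0) (k2 : A - A⁻¹ ≠ 0) :
    1/N * ( (R*U⁻¹ - R⁻¹*U)/d * ((R-R⁻¹)/d) * ((U-U⁻¹)/d) * ((A*I⁻¹-A⁻¹*I)/d) ) /
        ( (U-U⁻¹)/d * ((A-A⁻¹)/d) ) * d^2
      + 1/N * ( (R*U⁻¹ - R⁻¹*U)/d * ((R-R⁻¹)/d) * ((I-I⁻¹)/d) * ((A*J⁻¹-A⁻¹*J)/d) ) /
        ( (U-U⁻¹)/d * ((A-A⁻¹)/d) ) * d^2 * (J⁻¹*U⁻¹)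
      - 1/N * ( (R*U⁻¹ - R⁻¹*U)/d * ((R-R⁻¹)/d) * ((I-I⁻¹)/d) * ((A*J⁻¹*U⁻¹-A⁻¹*J*U)/d) ) /
        ( (U-U⁻¹)/d * ((A-A⁻¹)/d) ) * d^2 * J⁻¹
    = 1/N * (R*R*U⁻¹*I⁻¹ + R⁻¹*R⁻¹*U*I⁻¹ - U*I⁻¹ - U⁻¹*I⁻¹) := by
  have hden : (U-U⁻¹)/d * ((A-A⁻¹)/d) ≠ 0 :=
    mul_ne_zero (div_ne_zero k1 hd) (div_ne_zero k2 hd)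
  have inner : (U-U⁻¹)/d*((A*I⁻¹-A⁻¹*I)/d) + (I-I⁻¹)/d*((A*J⁻¹-A⁻¹*J)/d)*(J⁻¹*U⁻¹)
      - (I-I⁻¹)/d*((A*J⁻¹*U⁻¹-A⁻¹*J*U)/d)*J⁻¹ = I⁻¹*((U-U⁻¹)/d*((A-A⁻¹)/d)) := by
    field_simp
    ring
  have big : 1/N * ( (R*U⁻¹ - R⁻¹*U)/d * ((R-R⁻¹)/d) * ((U-U⁻¹)/d) * ((A*I⁻¹-A⁻¹*I)/d) ) /
        ( (U-U⁻¹)/d * ((A-A⁻¹)/d) ) * d^2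
      + 1/N * ( (R*U⁻¹ - R⁻¹*U)/d * ((R-R⁻¹)/d) * ((I-I⁻¹)/d) * ((A*J⁻¹-A⁻¹*J)/d) ) /
        ( (U-U⁻¹)/d * ((A-A⁻¹)/d) ) * d^2 * (J⁻¹*U⁻¹)
      - 1/N * ( (R*U⁻¹ - R⁻¹*U)/d * ((R-R⁻¹)/d) * ((I-I⁻¹)/d) * ((A*J⁻¹*U⁻¹-A⁻¹*J*U)/d) ) /
        ( (U-U⁻¹)/d * ((A-A⁻¹)/d) ) * d^2 * J⁻¹
      = 1/N*d^2*((R*U⁻¹-R⁻¹*U)/d*((R-R⁻¹)/d))*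
        (((U-U⁻¹)/d*((A*I⁻¹-A⁻¹*I)/d) + (I-I⁻¹)/d*((A*J⁻¹-A⁻¹*J)/d)*(J⁻¹*U⁻¹)
          - (I-I⁻¹)/d*((A*J⁻¹*U⁻¹-A⁻¹*J*U)/d)*J⁻¹) / ( (U-U⁻¹)/d * ((A-A⁻¹)/d) )) := by
    ring
  rw [big, inner, mul_div_cancel_right₀ I⁻¹ hden]
  field_simp
  ring

lemma keyAlg2 (hU : U ≠ 0) (hA : A ≠ 0) (hI : I ≠ 0) (hJ : J ≠ 0)
    (hR : R ≠ 0) (hd : d ≠ 0) (hN : N ≠ 0)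
    (k1 : U - U⁻¹ ≠ 0) (k2 : A - A⁻¹ ≠ 0) :
    1/N * ( (R*U⁻¹ - R⁻¹*U)/d * ((R-R⁻¹)/d) * ((U-U⁻¹)/d) * ((A*I⁻¹-A⁻¹*I)/d) ) /
        ( (U-U⁻¹)/d * ((A-A⁻¹)/d) ) * d^2
      + 1/N * ( (R*U⁻¹ - R⁻¹*U)/d * ((R-R⁻¹)/d) * ((J-J⁻¹)/d) * ((A*I⁻¹-A⁻¹*I)/d) ) /
        ( (U-U⁻¹)/d * ((A-A⁻¹)/d) ) * d^2 * (J*U)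
      - 1/N * ( (R*U⁻¹ - R⁻¹*U)/d * ((R-R⁻¹)/d) * ((J*U-J⁻¹*U⁻¹)/d) * ((A*I⁻¹-A⁻¹*I)/d) ) /
        ( (U-U⁻¹)/d * ((A-A⁻¹)/d) ) * d^2 * J
    = 0 := by
  have inner : (U-U⁻¹)/d + (J-J⁻¹)/d*(J*U) - (J*U-J⁻¹*U⁻¹)/d*J = 0 := by
    field_simp
    ring
  have big : 1/N * ( (R*U⁻¹ - R⁻¹*U)/d * ((R-R⁻¹)/d) * ((U-U⁻¹)/d) * ((A*I⁻¹-A⁻¹*I)/d) ) /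
        ( (U-U⁻¹)/d * ((A-A⁻¹)/d) ) * d^2
      + 1/N * ( (R*U⁻¹ - R⁻¹*U)/d * ((R-R⁻¹)/d) * ((J-J⁻¹)/d) * ((A*I⁻¹-A⁻¹*I)/d) ) /
        ( (U-U⁻¹)/d * ((A-A⁻¹)/d) ) * d^2 * (J*U)
      - 1/N * ( (R*U⁻¹ - R⁻¹*U)/d * ((R-R⁻¹)/d) * ((J*U-J⁻¹*U⁻¹)/d) * ((A*I⁻¹-A⁻¹*I)/d) ) /
        ( (U-U⁻¹)/d * ((A-A⁻¹)/d) ) * d^2 * J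
      = 1/N*d^2*((R*U⁻¹-R⁻¹*U)/d*((R-R⁻¹)/d)*((A*I⁻¹-A⁻¹*I)/d))*
        (((U-U⁻¹)/d + (J-J⁻¹)/d*(J*U) - (J*U-J⁻¹*U⁻¹)/d*J) / ( (U-U⁻¹)/d * ((A-A⁻¹)/d) )) := by
    ring
  rw [big, inner, zero_div, mul_zero]

lemma keyAlg2' (hU : U ≠ 0) (hA : A ≠ 0) (hI : I ≠ 0) (hJ : J ≠ 0)
    (hR : R ≠ 0) (hd : d ≠ 0) (hN : N ≠ 0)
    (k1 : U - U⁻¹ ≠ 0) (k2 : A - A⁻¹ ≠ 0) :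
    1/N * ( (R*U⁻¹ - R⁻¹*U)/d * ((R-R⁻¹)/d) * ((U-U⁻¹)/d) * ((A*I⁻¹-A⁻¹*I)/d) ) /
        ( (U-U⁻¹)/d * ((A-A⁻¹)/d) ) * d^2
      + 1/N * ( (R*U⁻¹ - R⁻¹*U)/d * ((R-R⁻¹)/d) * ((J-J⁻¹)/d) * ((A*I⁻¹-A⁻¹*I)/d) ) /
        ( (U-U⁻¹)/d * ((A-A⁻¹)/d) ) * d^2 * (J⁻¹*U⁻¹)
      - 1/N * ( (R*U⁻¹ - R⁻¹*U)/d * ((R-R⁻¹)/d) * ((J*U-J⁻¹*U⁻¹)/d) * ((A*I⁻¹-A⁻¹*I)/d) ) /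
        ( (U-U⁻¹)/d * ((A-A⁻¹)/d) ) * d^2 * J⁻¹
    = 0 := by
  have inner : (U-U⁻¹)/d + (J-J⁻¹)/d*(J⁻¹*U⁻¹) - (J*U-J⁻¹*U⁻¹)/d*J⁻¹ = 0 := by
    field_simp
    ring
  have big : 1/N * ( (R*U⁻¹ - R⁻¹*U)/d * ((R-R⁻¹)/d) * ((U-U⁻¹)/d) * ((A*I⁻¹-A⁻¹*I)/d) ) /
        ( (U-U⁻¹)/d * ((A-A⁻¹)/d) ) * d^2
      + 1/N * ( (R*U⁻¹ - R⁻¹*U)/d * ((R-R⁻¹)/d) * ((J-J⁻¹)/d) * ((A*I⁻¹-A⁻¹*I)/d) ) /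
        ( (U-U⁻¹)/d * ((A-A⁻¹)/d) ) * d^2 * (J⁻¹*U⁻¹)
      - 1/N * ( (R*U⁻¹ - R⁻¹*U)/d * ((R-R⁻¹)/d) * ((J*U-J⁻¹*U⁻¹)/d) * ((A*I⁻¹-A⁻¹*I)/d) ) /
        ( (U-U⁻¹)/d * ((A-A⁻¹)/d) ) * d^2 * J⁻¹
      = 1/N*d^2*((R*U⁻¹-R⁻¹*U)/d*((R-R⁻¹)/d)*((A*I⁻¹-A⁻¹*I)/d))*
        (((U-U⁻¹)/d + (J-J⁻¹)/d*(J⁻¹*U⁻¹) - (J*U-J⁻¹*U⁻¹)/d*J⁻¹) / ( (U-U⁻¹)/d * ((A-A⁻¹)/d) )) := by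
    ring
  rw [big, inner, zero_div, mul_zero]

end KeyAlg

section KeyCoeff

variable (x r a : ℝ) (i j : ℤ) (e : ℝ) (n : ℕ)

lemma key1 (hx0 : 0 < x) (hx1 : x < 1) (hr : 1 < r) (ha : 0 < a)
    (hi : 1 ≤ i) (hij : i ≤ j) (he : e = 1 ∨ e = -1) (hn : 1 ≤ n) :
    fCoeff x r a 1 i n + fCoeff x r a j i n * x ^ (e*((j:ℝ)+1)*(n:ℝ))
      - fCoeff x r a (j+1) i n * x ^ (e*(j:ℝ)*(n:ℝ))
    = (1/(n:ℝ)) * (x ^ ((2*r-1+e*(i:ℝ))*(n:ℝ)) + x ^ ((-(2*r)+1+e*(i:ℝ))*(n:ℝ))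
        - x ^ ((1+e*(i:ℝ))*(n:ℝ)) - x ^ ((-1+e*(i:ℝ))*(n:ℝ))) := by
  have h1i : min (1:ℤ) i = 1 := min_eq_left hi
  have h2i : max (1:ℤ) i = i := max_eq_right hi
  have h3 : min j i = i := min_eq_right hij
  have h4 : max j i = j := max_eq_left hij
  have h5 : min (j+1) i = i := min_eq_right (by omega)
  have h6 : max (j+1) i = j+1 := max_eq_left (by omega)
  have hN : (0:ℝ) < (n:ℝ) := by exact_mod_cast hn
  have hc : x - x⁻¹ ≠ 0 := by have := hcpos hx0 hx1; linarith [this]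
  have hsplit : ∀ s t : ℝ, x ^ (s + t) = x ^ s * x ^ t := Real.rpow_add hx0
  have hinv : ∀ s : ℝ, x ^ (-s) = (x ^ s)⁻¹ := fun s => Real.rpow_neg hx0.le s
  have k1 : x ^ ((n:ℝ)) - (x ^ ((n:ℝ)))⁻¹ ≠ 0 := by
    have h := Real.rpow_lt_rpow_of_exponent_gt hx0 hx1 (show -(n:ℝ) < n by linarith)
    rw [hinv] at h; linarith
  have k2 : x ^ (a*(n:ℝ)) - (x ^ (a*(n:ℝ)))⁻¹ ≠ 0 := by
    have h := Real.rpow_lt_rpow_of_exponent_gt hx0 hx1 (show -(a*(n:ℝ)) < a*n by nlinarith)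
    rw [hinv] at h; linarith
  have e1 : x ^ ((r-1)*(n:ℝ)) = x ^ (r*(n:ℝ)) * (x ^ ((n:ℝ)))⁻¹ := by
    simp only [← hinv, ← hsplit]; congr 1; ring
  have e2 : x ^ (-((r-1)*(n:ℝ))) = (x ^ (r*(n:ℝ)))⁻¹ * x ^ ((n:ℝ)) := by
    simp only [← hinv, ← hsplit]; congr 1; ring
  have e3 : x ^ (-(r*(n:ℝ))) = (x ^ (r*(n:ℝ)))⁻¹ := by rw [hinv]
  have e4 : x ^ ((1:ℝ)*(n:ℝ)) = x ^ ((n:ℝ)) := by congr 1; ring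
  have e5 : x ^ (-((1:ℝ)*(n:ℝ))) = (x ^ ((n:ℝ)))⁻¹ := by
    simp only [← hinv]; congr 1; ring
  have e6 : x ^ (-((n:ℝ))) = (x ^ ((n:ℝ)))⁻¹ := by rw [hinv]
  have e7 : x ^ ((a-(i:ℝ))*(n:ℝ)) = x ^ (a*(n:ℝ)) * (x ^ ((i:ℝ)*(n:ℝ)))⁻¹ := by
    simp only [← hinv, ← hsplit]; congr 1; ring
  have e8 : x ^ (-((a-(i:ℝ))*(n:ℝ))) = (x ^ (a*(n:ℝ)))⁻¹ * x ^ ((i:ℝ)*(n:ℝ)) := by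
    simp only [← hinv, ← hsplit]; congr 1; ring
  have e9 : x ^ (-(a*(n:ℝ))) = (x ^ (a*(n:ℝ)))⁻¹ := by rw [hinv]
  have e10 : x ^ ((a-(j:ℝ))*(n:ℝ)) = x ^ (a*(n:ℝ)) * (x ^ ((j:ℝ)*(n:ℝ)))⁻¹ := by
    simp only [← hinv, ← hsplit]; congr 1; ring
  have e11 : x ^ (-((a-(j:ℝ))*(n:ℝ))) = (x ^ (a*(n:ℝ)))⁻¹ * x ^ ((j:ℝ)*(n:ℝ)) := by
    simp only [← hinv, ← hsplit]; congr 1; ring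
  have e12 : x ^ (-((i:ℝ)*(n:ℝ))) = (x ^ ((i:ℝ)*(n:ℝ)))⁻¹ := by rw [hinv]
  have e13 : x ^ ((a-((j:ℝ)+1))*(n:ℝ))
      = x ^ (a*(n:ℝ)) * (x ^ ((j:ℝ)*(n:ℝ)))⁻¹ * (x ^ ((n:ℝ)))⁻¹ := by
    simp only [← hinv, ← hsplit]; congr 1; ring
  have e14 : x ^ (-((a-((j:ℝ)+1))*(n:ℝ)))
      = (x ^ (a*(n:ℝ)))⁻¹ * x ^ ((j:ℝ)*(n:ℝ)) * x ^ ((n:ℝ)) := by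
    simp only [← hinv, ← hsplit]; congr 1; ring
  have hUne : x ^ ((n:ℝ)) ≠ 0 := (Real.rpow_pos_of_pos hx0 _).ne'
  have hAne : x ^ (a*(n:ℝ)) ≠ 0 := (Real.rpow_pos_of_pos hx0 _).ne'
  have hIne : x ^ ((i:ℝ)*(n:ℝ)) ≠ 0 := (Real.rpow_pos_of_pos hx0 _).ne'
  have hJne : x ^ ((j:ℝ)*(n:ℝ)) ≠ 0 := (Real.rpow_pos_of_pos hx0 _).ne'
  have hRne : x ^ (r*(n:ℝ)) ≠ 0 := (Real.rpow_pos_of_pos hx0 _).ne'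
  obtain rfl | rfl := he
  · have e15 : x ^ ((1:ℝ)*((j:ℝ)+1)*(n:ℝ)) = x ^ ((j:ℝ)*(n:ℝ)) * x ^ ((n:ℝ)) := by
      simp only [← hinv, ← hsplit]; congr 1; ring
    have e16 : x ^ ((1:ℝ)*(j:ℝ)*(n:ℝ)) = x ^ ((j:ℝ)*(n:ℝ)) := by congr 1; ring
    have e17 : x ^ ((2*r-1+(1:ℝ)*(i:ℝ))*(n:ℝ))
        = x ^ (r*(n:ℝ)) * x ^ (r*(n:ℝ)) * (x ^ ((n:ℝ)))⁻¹ * x ^ ((i:ℝ)*(n:ℝ)) := by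
      simp only [← hinv, ← hsplit]; congr 1; ring
    have e18 : x ^ ((-(2*r)+1+(1:ℝ)*(i:ℝ))*(n:ℝ))
        = (x ^ (r*(n:ℝ)))⁻¹ * (x ^ (r*(n:ℝ)))⁻¹ * x ^ ((n:ℝ)) * x ^ ((i:ℝ)*(n:ℝ)) := by
      simp only [← hinv, ← hsplit]; congr 1; ring
    have e19 : x ^ ((1+(1:ℝ)*(i:ℝ))*(n:ℝ)) = x ^ ((n:ℝ)) * x ^ ((i:ℝ)*(n:ℝ)) := by
      simp only [← hinv, ← hsplit]; congr 1; ring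
    have e20 : x ^ ((-1+(1:ℝ)*(i:ℝ))*(n:ℝ)) = (x ^ ((n:ℝ)))⁻¹ * x ^ ((i:ℝ)*(n:ℝ)) := by
      simp only [← hinv, ← hsplit]; congr 1; ring
    simp only [fCoeff, qint, h1i, h2i, h3, h4, h5, h6]
    push_cast
    rw [e1, e2, e3, e4, e5, e6, e7, e8, e9, e10, e11, e12, e13, e14, e15, e16, e17, e18, e19, e20]
    exact keyAlg1 _ _ _ _ _ _ _ hUne hAne hIne hJne hRne hc hN.ne' k1 k2
  · have e15 : x ^ ((-1:ℝ)*((j:ℝ)+1)*(n:ℝ)) = (x ^ ((j:ℝ)*(n:ℝ)))⁻¹ * (x ^ ((n:ℝ)))⁻¹ := by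
      simp only [← hinv, ← hsplit]; congr 1; ring
    have e16 : x ^ ((-1:ℝ)*(j:ℝ)*(n:ℝ)) = (x ^ ((j:ℝ)*(n:ℝ)))⁻¹ := by
      simp only [← hinv]; congr 1; ring
    have e17 : x ^ ((2*r-1+(-1:ℝ)*(i:ℝ))*(n:ℝ))
        = x ^ (r*(n:ℝ)) * x ^ (r*(n:ℝ)) * (x ^ ((n:ℝ)))⁻¹ * (x ^ ((i:ℝ)*(n:ℝ)))⁻¹ := by
      simp only [← hinv, ← hsplit]; congr 1; ring
    have e18 : x ^ ((-(2*r)+1+(-1:ℝ)*(i:ℝ))*(n:ℝ))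
        = (x ^ (r*(n:ℝ)))⁻¹ * (x ^ (r*(n:ℝ)))⁻¹ * x ^ ((n:ℝ)) * (x ^ ((i:ℝ)*(n:ℝ)))⁻¹ := by
      simp only [← hinv, ← hsplit]; congr 1; ring
    have e19 : x ^ ((1+(-1:ℝ)*(i:ℝ))*(n:ℝ)) = x ^ ((n:ℝ)) * (x ^ ((i:ℝ)*(n:ℝ)))⁻¹ := by
      simp only [← hinv, ← hsplit]; congr 1; ring
    have e20 : x ^ ((-1+(-1:ℝ)*(i:ℝ))*(n:ℝ)) = (x ^ ((n:ℝ)))⁻¹ * (x ^ ((i:ℝ)*(n:ℝ)))⁻¹ := by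
      simp only [← hinv, ← hsplit]; congr 1; ring
    simp only [fCoeff, qint, h1i, h2i, h3, h4, h5, h6]
    push_cast
    rw [e1, e2, e3, e4, e5, e6, e7, e8, e9, e10, e11, e12, e13, e14, e15, e16, e17, e18, e19, e20]
    exact keyAlg1' _ _ _ _ _ _ _ hUne hAne hIne hJne hRne hc hN.ne' k1 k2

lemma key2 (hx0 : 0 < x) (hx1 : x < 1) (hr : 1 < r) (ha : 0 < a)
    (hi : 1 ≤ i) (hj : 1 ≤ j) (hji : j < i) (he : e = 1 ∨ e = -1) (hn : 1 ≤ n) :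
    fCoeff x r a 1 i n + fCoeff x r a j i n * x ^ (e*((j:ℝ)+1)*(n:ℝ))
      - fCoeff x r a (j+1) i n * x ^ (e*(j:ℝ)*(n:ℝ)) = 0 := by
  have h1i : min (1:ℤ) i = 1 := min_eq_left hi
  have h2i : max (1:ℤ) i = i := max_eq_right hi
  have h3 : min j i = j := min_eq_left hji.le
  have h4 : max j i = i := max_eq_right hji.le
  have h5 : min (j+1) i = j+1 := min_eq_left (by omega)
  have h6 : max (j+1) i = i := max_eq_right (by omega)
  have hN : (0:ℝ) < (n:ℝ) := by exact_mod_cast hn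
  have hc : x - x⁻¹ ≠ 0 := by have := hcpos hx0 hx1; linarith [this]
  have hsplit : ∀ s t : ℝ, x ^ (s + t) = x ^ s * x ^ t := Real.rpow_add hx0
  have hinv : ∀ s : ℝ, x ^ (-s) = (x ^ s)⁻¹ := fun s => Real.rpow_neg hx0.le s
  have k1 : x ^ ((n:ℝ)) - (x ^ ((n:ℝ)))⁻¹ ≠ 0 := by
    have h := Real.rpow_lt_rpow_of_exponent_gt hx0 hx1 (show -(n:ℝ) < n by linarith)
    rw [hinv] at h; linarith
  have k2 : x ^ (a*(n:ℝ)) - (x ^ (a*(n:ℝ)))⁻¹ ≠ 0 := by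
    have h := Real.rpow_lt_rpow_of_exponent_gt hx0 hx1 (show -(a*(n:ℝ)) < a*n by nlinarith)
    rw [hinv] at h; linarith
  have e1 : x ^ ((r-1)*(n:ℝ)) = x ^ (r*(n:ℝ)) * (x ^ ((n:ℝ)))⁻¹ := by
    simp only [← hinv, ← hsplit]; congr 1; ring
  have e2 : x ^ (-((r-1)*(n:ℝ))) = (x ^ (r*(n:ℝ)))⁻¹ * x ^ ((n:ℝ)) := by
    simp only [← hinv, ← hsplit]; congr 1; ring
  have e3 : x ^ (-(r*(n:ℝ))) = (x ^ (r*(n:ℝ)))⁻¹ := by rw [hinv]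
  have e4 : x ^ ((1:ℝ)*(n:ℝ)) = x ^ ((n:ℝ)) := by congr 1; ring
  have e5 : x ^ (-((1:ℝ)*(n:ℝ))) = (x ^ ((n:ℝ)))⁻¹ := by
    simp only [← hinv]; congr 1; ring
  have e6 : x ^ (-((n:ℝ))) = (x ^ ((n:ℝ)))⁻¹ := by rw [hinv]
  have e7 : x ^ ((a-(i:ℝ))*(n:ℝ)) = x ^ (a*(n:ℝ)) * (x ^ ((i:ℝ)*(n:ℝ)))⁻¹ := by
    simp only [← hinv, ← hsplit]; congr 1; ring
  have e8 : x ^ (-((a-(i:ℝ))*(n:ℝ))) = (x ^ (a*(n:ℝ)))⁻¹ * x ^ ((i:ℝ)*(n:ℝ)) := by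
    simp only [← hinv, ← hsplit]; congr 1; ring
  have e9 : x ^ (-(a*(n:ℝ))) = (x ^ (a*(n:ℝ)))⁻¹ := by rw [hinv]
  have e12 : x ^ (-((j:ℝ)*(n:ℝ))) = (x ^ ((j:ℝ)*(n:ℝ)))⁻¹ := by rw [hinv]
  have e21 : x ^ (((j:ℝ)+1)*(n:ℝ)) = x ^ ((j:ℝ)*(n:ℝ)) * x ^ ((n:ℝ)) := by
    simp only [← hinv, ← hsplit]; congr 1; ring
  have e22 : x ^ (-(((j:ℝ)+1)*(n:ℝ))) = (x ^ ((j:ℝ)*(n:ℝ)))⁻¹ * (x ^ ((n:ℝ)))⁻¹ := by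
    simp only [← hinv, ← hsplit]; congr 1; ring
  have hUne : x ^ ((n:ℝ)) ≠ 0 := (Real.rpow_pos_of_pos hx0 _).ne'
  have hAne : x ^ (a*(n:ℝ)) ≠ 0 := (Real.rpow_pos_of_pos hx0 _).ne'
  have hIne : x ^ ((i:ℝ)*(n:ℝ)) ≠ 0 := (Real.rpow_pos_of_pos hx0 _).ne'
  have hJne : x ^ ((j:ℝ)*(n:ℝ)) ≠ 0 := (Real.rpow_pos_of_pos hx0 _).ne'
  have hRne : x ^ (r*(n:ℝ)) ≠ 0 := (Real.rpow_pos_of_pos hx0 _).ne'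
  obtain rfl | rfl := he
  · have e15 : x ^ ((1:ℝ)*((j:ℝ)+1)*(n:ℝ)) = x ^ ((j:ℝ)*(n:ℝ)) * x ^ ((n:ℝ)) := by
      simp only [← hinv, ← hsplit]; congr 1; ring
    have e16 : x ^ ((1:ℝ)*(j:ℝ)*(n:ℝ)) = x ^ ((j:ℝ)*(n:ℝ)) := by congr 1; ring
    simp only [fCoeff, qint, h1i, h2i, h3, h4, h5, h6]
    push_cast
    rw [e1, e2, e3, e4, e5, e6, e7, e8, e9, e12, e21, e22, e15, e16]
    exact keyAlg2 _ _ _ _ _ _ _ hUne hAne hIne hJne hRne hc hN.ne' k1 k2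
  · have e15 : x ^ ((-1:ℝ)*((j:ℝ)+1)*(n:ℝ)) = (x ^ ((j:ℝ)*(n:ℝ)))⁻¹ * (x ^ ((n:ℝ)))⁻¹ := by
      simp only [← hinv, ← hsplit]; congr 1; ring
    have e16 : x ^ ((-1:ℝ)*(j:ℝ)*(n:ℝ)) = (x ^ ((j:ℝ)*(n:ℝ)))⁻¹ := by
      simp only [← hinv]; congr 1; ring
    simp only [fCoeff, qint, h1i, h2i, h3, h4, h5, h6]
    push_cast
    rw [e1, e2, e3, e4, e5, e6, e7, e8, e9, e12, e21, e22, e15, e16]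
    exact keyAlg2' _ _ _ _ _ _ _ hUne hAne hIne hJne hRne hc hN.ne' k1 k2

end KeyCoeff

lemma term1 (x r a : ℝ) (i j : ℤ) (e : ℝ) (z : ℂ) (m : ℕ)
    (hx0 : 0 < x) (hx1 : x < 1) (hr : 1 < r) (ha : 0 < a)
    (hi : 1 ≤ i) (hij : i ≤ j) (he : e = 1 ∨ e = -1) :
    fTerm x r a 1 i z m + fTerm x r a j i (xp x (e*((j:ℝ)+1)) * z) m
      - fTerm x r a (j+1) i (xp x (e*(j:ℝ)) * z) m
    = -((xp x (2*r-1+e*(i:ℝ)) * z)^(m+1)/((m:ℂ)+1))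
        - (xp x (-(2*r)+1+e*(i:ℝ)) * z)^(m+1)/((m:ℂ)+1)
        + (xp x (1+e*(i:ℝ)) * z)^(m+1)/((m:ℂ)+1)
        + (xp x (-1+e*(i:ℝ)) * z)^(m+1)/((m:ℂ)+1) := by
  have hkey := key1 x r a i j e (m+1) hx0 hx1 hr ha hi hij he (Nat.le_add_left 1 m)
  have hC := congrArg (fun t : ℝ => (t:ℂ)) hkey
  push_cast at hC
  simp only [fTerm, mul_pow, xp_pow hx0]
  push_cast
  linear_combination (-(z:ℂ)^(m+1)) * hC

lemma term2 (x r a : ℝ) (i j : ℤ) (e : ℝ) (z : ℂ) (m : ℕ)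
    (hx0 : 0 < x) (hx1 : x < 1) (hr : 1 < r) (ha : 0 < a)
    (hi : 1 ≤ i) (hj : 1 ≤ j) (hji : j < i) (he : e = 1 ∨ e = -1) :
    fTerm x r a 1 i z m + fTerm x r a j i (xp x (e*((j:ℝ)+1)) * z) m
      - fTerm x r a (j+1) i (xp x (e*(j:ℝ)) * z) m = 0 := by
  have hkey := key2 x r a i j e (m+1) hx0 hx1 hr ha hi hj hji he (Nat.le_add_left 1 m)
  have hC := congrArg (fun t : ℝ => (t:ℂ)) hkey
  push_cast at hC
  simp only [fTerm, mul_pow, xp_pow hx0]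
  push_cast
  linear_combination (-(z:ℂ)^(m+1)) * hC

lemma one_sub_ne {w : ℂ} (hw : ‖w‖ < 1) : (1:ℂ) - w ≠ 0 := by
  intro h
  have hw1 : w = 1 := by linear_combination -h
  rw [hw1] at hw
  simp at hw


/-- Relation (4.6) of Lemma 4.5: for a sign `e ∈ {+1,-1}`,
if `i ≤ j` then `f_{1,i}(z;a) f_{j,i}(x^{e(j+1)}z;a) = f_{j+1,i}(x^{ej}z;a) Δ_1(x^{ei}z)`,
while if `j < i` then `f_{1,i}(z;a) f_{j,i}(x^{e(j+1)}z;a) = f_{j+1,i}(x^{ej}z;a)`,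
for `z` of sufficiently small modulus. -/
theorem statement2 (x r a : ℝ) (hx0 : 0 < x) (hx1 : x < 1) (hr : 1 < r) (ha : 0 < a)
    (i j : ℤ) (hi : 1 ≤ i) (hj : 1 ≤ j) (e : ℝ) (he : e = 1 ∨ e = -1) :
    ∃ ρ : ℝ, 0 < ρ ∧ ∀ z : ℂ, ‖z‖ < ρ →
      (i ≤ j →
        fFun x r a 1 i z * fFun x r a j i (xp x (e * ((j : ℝ) + 1)) * z) =
          fFun x r a (j + 1) i (xp x (e * (j : ℝ)) * z) * Delta x r 1 (xp x (e * (i : ℝ)) * z)) ∧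
      (j < i →
        fFun x r a 1 i z * fFun x r a j i (xp x (e * ((j : ℝ) + 1)) * z) =
          fFun x r a (j + 1) i (xp x (e * (j : ℝ)) * z)) := by
  obtain ⟨ρ1, hρ1, hS1⟩ := summable_fTerm x r a hx0 hx1 hr ha 1 i le_rfl hi
  obtain ⟨ρ2, hρ2, hS2⟩ := summable_fTerm x r a hx0 hx1 hr ha j i hj hi
  obtain ⟨ρ3, hρ3, hS3⟩ := summable_fTerm x r a hx0 hx1 hr ha (j+1) i (by omega) hi
  have hp2 : (0:ℝ) < x ^ (e*((j:ℝ)+1)) := Real.rpow_pos_of_pos hx0 _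
  have hp3 : (0:ℝ) < x ^ (e*(j:ℝ)) := Real.rpow_pos_of_pos hx0 _
  have ht1 : (0:ℝ) < x ^ (2*r-1+e*(i:ℝ)) := Real.rpow_pos_of_pos hx0 _
  have ht2 : (0:ℝ) < x ^ (-(2*r)+1+e*(i:ℝ)) := Real.rpow_pos_of_pos hx0 _
  have ht3 : (0:ℝ) < x ^ (1+e*(i:ℝ)) := Real.rpow_pos_of_pos hx0 _
  have ht4 : (0:ℝ) < x ^ (-1+e*(i:ℝ)) := Real.rpow_pos_of_pos hx0 _
  refine ⟨min ρ1 (min (ρ2 / x ^ (e*((j:ℝ)+1))) (min (ρ3 / x ^ (e*(j:ℝ)))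
      (min (x ^ (2*r-1+e*(i:ℝ)))⁻¹ (min (x ^ (-(2*r)+1+e*(i:ℝ)))⁻¹
        (min (x ^ (1+e*(i:ℝ)))⁻¹ (x ^ (-1+e*(i:ℝ)))⁻¹))))), by positivity, fun z hzabs => ?_⟩
  have hz := hzabs
  rw [lt_min_iff, lt_min_iff, lt_min_iff, lt_min_iff, lt_min_iff, lt_min_iff] at hz
  obtain ⟨hz1, hz2, hz3, hb1, hb2, hb3, hb4⟩ := hz
  -- summability of the three series
  have S1 : Summable (fTerm x r a 1 i z) := hS1 z hz1
  have hw2 : ‖xp x (e*((j:ℝ)+1)) * z‖ < ρ2 := by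
    rw [norm_mul, xp_norm hx0, mul_comm]
    exact (lt_div_iff₀ hp2).mp hz2
  have S2 : Summable (fTerm x r a j i (xp x (e*((j:ℝ)+1)) * z)) := hS2 _ hw2
  have hw3 : ‖xp x (e*(j:ℝ)) * z‖ < ρ3 := by
    rw [norm_mul, xp_norm hx0, mul_comm]
    exact (lt_div_iff₀ hp3).mp hz3
  have S3 : Summable (fTerm x r a (j+1) i (xp x (e*(j:ℝ)) * z)) := hS3 _ hw3
  -- the four "v" parameters
  have hv1 : ‖xp x (2*r-1+e*(i:ℝ)) * z‖ < 1 := by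
    rw [norm_mul, xp_norm hx0]
    calc x ^ (2*r-1+e*(i:ℝ)) * ‖z‖ < x ^ (2*r-1+e*(i:ℝ)) * (x ^ (2*r-1+e*(i:ℝ)))⁻¹ :=
          mul_lt_mul_of_pos_left hb1 ht1
      _ = 1 := mul_inv_cancel₀ ht1.ne'
  have hv2 : ‖xp x (-(2*r)+1+e*(i:ℝ)) * z‖ < 1 := by
    rw [norm_mul, xp_norm hx0]
    calc x ^ (-(2*r)+1+e*(i:ℝ)) * ‖z‖ < x ^ (-(2*r)+1+e*(i:ℝ)) * (x ^ (-(2*r)+1+e*(i:ℝ)))⁻¹ :=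
          mul_lt_mul_of_pos_left hb2 ht2
      _ = 1 := mul_inv_cancel₀ ht2.ne'
  have hv3 : ‖xp x (1+e*(i:ℝ)) * z‖ < 1 := by
    rw [norm_mul, xp_norm hx0]
    calc x ^ (1+e*(i:ℝ)) * ‖z‖ < x ^ (1+e*(i:ℝ)) * (x ^ (1+e*(i:ℝ)))⁻¹ :=
          mul_lt_mul_of_pos_left hb3 ht3
      _ = 1 := mul_inv_cancel₀ ht3.ne'
  have hv4 : ‖xp x (-1+e*(i:ℝ)) * z‖ < 1 := by
    rw [norm_mul, xp_norm hx0]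
    calc x ^ (-1+e*(i:ℝ)) * ‖z‖ < x ^ (-1+e*(i:ℝ)) * (x ^ (-1+e*(i:ℝ)))⁻¹ :=
          mul_lt_mul_of_pos_left hb4 ht4
      _ = 1 := mul_inv_cancel₀ ht4.ne'
  have Hk1 := hasSum_log _ hv1
  have Hk2 := hasSum_log _ hv2
  have Hk3 := hasSum_log _ hv3
  have Hk4 := hasSum_log _ hv4
  have HL : HasSum (fun m : ℕ =>
      -((xp x (2*r-1+e*(i:ℝ)) * z)^(m+1)/((m:ℂ)+1)
          + (xp x (-(2*r)+1+e*(i:ℝ)) * z)^(m+1)/((m:ℂ)+1))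
        + ((xp x (1+e*(i:ℝ)) * z)^(m+1)/((m:ℂ)+1)
          + (xp x (-1+e*(i:ℝ)) * z)^(m+1)/((m:ℂ)+1)))
      (-((-Complex.log (1 - xp x (2*r-1+e*(i:ℝ)) * z))
          + (-Complex.log (1 - xp x (-(2*r)+1+e*(i:ℝ)) * z)))
        + ((-Complex.log (1 - xp x (1+e*(i:ℝ)) * z))
          + (-Complex.log (1 - xp x (-1+e*(i:ℝ)) * z)))) :=
    ((Hk1.add Hk2).neg).add (Hk3.add Hk4)
  have H12 : HasSum (fun m : ℕ => fTerm x r a 1 i z m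
      + fTerm x r a j i (xp x (e*((j:ℝ)+1)) * z) m)
      ((∑' m : ℕ, fTerm x r a 1 i z m)
        + (∑' m : ℕ, fTerm x r a j i (xp x (e*((j:ℝ)+1)) * z) m)) :=
    S1.hasSum.add S2.hasSum
  constructor
  · intro hij
    have heq : (fun m : ℕ => fTerm x r a 1 i z m
        + fTerm x r a j i (xp x (e*((j:ℝ)+1)) * z) m)
        = (fun m : ℕ => fTerm x r a (j+1) i (xp x (e*(j:ℝ)) * z) m
          + (-((xp x (2*r-1+e*(i:ℝ)) * z)^(m+1)/((m:ℂ)+1)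
              + (xp x (-(2*r)+1+e*(i:ℝ)) * z)^(m+1)/((m:ℂ)+1))
            + ((xp x (1+e*(i:ℝ)) * z)^(m+1)/((m:ℂ)+1)
              + (xp x (-1+e*(i:ℝ)) * z)^(m+1)/((m:ℂ)+1)))) := by
      funext m
      linear_combination term1 x r a i j e z m hx0 hx1 hr ha hi hij he
    have H3L : HasSum (fun m : ℕ => fTerm x r a 1 i z m
        + fTerm x r a j i (xp x (e*((j:ℝ)+1)) * z) m)
        ((∑' m : ℕ, fTerm x r a (j+1) i (xp x (e*(j:ℝ)) * z) m)
          + (-((-Complex.log (1 - xp x (2*r-1+e*(i:ℝ)) * z))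
              + (-Complex.log (1 - xp x (-(2*r)+1+e*(i:ℝ)) * z)))
            + ((-Complex.log (1 - xp x (1+e*(i:ℝ)) * z))
              + (-Complex.log (1 - xp x (-1+e*(i:ℝ)) * z))))) := by
      rw [heq]
      exact S3.hasSum.add HL
    have hTeq := H12.unique H3L
    unfold fFun
    rw [← Complex.exp_add, hTeq, Complex.exp_add]
    congr 1
    -- exp of the log part equals Delta
    have h1ne := one_sub_ne hv1
    have h2ne := one_sub_ne hv2
    have h3ne := one_sub_ne hv3
    have h4ne := one_sub_ne hv4
    rw [show (-((-Complex.log (1 - xp x (2*r-1+e*(i:ℝ)) * z))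
          + (-Complex.log (1 - xp x (-(2*r)+1+e*(i:ℝ)) * z)))
        + ((-Complex.log (1 - xp x (1+e*(i:ℝ)) * z))
          + (-Complex.log (1 - xp x (-1+e*(i:ℝ)) * z))))
      = (Complex.log (1 - xp x (2*r-1+e*(i:ℝ)) * z)
          + Complex.log (1 - xp x (-(2*r)+1+e*(i:ℝ)) * z))
        - (Complex.log (1 - xp x (1+e*(i:ℝ)) * z)
          + Complex.log (1 - xp x (-1+e*(i:ℝ)) * z)) by ring]
    rw [Complex.exp_sub, Complex.exp_add, Complex.exp_add,
      Complex.exp_log h1ne, Complex.exp_log h2ne, Complex.exp_log h3ne, Complex.exp_log h4ne]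
    unfold Delta
    have hd1 : xp x (2*r - 1) * (xp x (e*(i:ℝ)) * z) = xp x (2*r-1+e*(i:ℝ)) * z := by
      rw [← mul_assoc, ← xp_add hx0]
    have hd2 : xp x (-(2*r) + 1) * (xp x (e*(i:ℝ)) * z) = xp x (-(2*r)+1+e*(i:ℝ)) * z := by
      rw [← mul_assoc, ← xp_add hx0]
    have hd3 : xp x 1 * (xp x (e*(i:ℝ)) * z) = xp x (1+e*(i:ℝ)) * z := by
      rw [← mul_assoc, ← xp_add hx0]
    have hd4 : xp x (-1) * (xp x (e*(i:ℝ)) * z) = xp x (-1+e*(i:ℝ)) * z := by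
      rw [← mul_assoc, ← xp_add hx0]
    rw [hd1, hd2, hd3, hd4]
  · intro hji
    have heq : (fun m : ℕ => fTerm x r a 1 i z m
        + fTerm x r a j i (xp x (e*((j:ℝ)+1)) * z) m)
        = (fun m : ℕ => fTerm x r a (j+1) i (xp x (e*(j:ℝ)) * z) m) := by
      funext m
      linear_combination term2 x r a i j e z m hx0 hx1 hr ha hi hj hji he
    have H3 : HasSum (fun m : ℕ => fTerm x r a 1 i z m
        + fTerm x r a j i (xp x (e*((j:ℝ)+1)) * z) m)
        (∑' m : ℕ, fTerm x r a (j+1) i (xp x (e*(j:ℝ)) * z) m) := by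
      rw [heq]
      exact S3.hasSum
    have hTeq := H12.unique H3
    unfold fFun
    rw [← Complex.exp_add, hTeq]
end

section
/- Let x and r be real numbers with 0 < x < 1 and r > 1, and let i ≥ 1 be an integer. Then: (i) Δ_i(z) = Δ_i(z^{−1}) for every nonzero complex z with z ∉ {x^{i}, x^{−i}}; (ii) lim_{z→x^{i}} (z − x^{i})·Δ_i(z) = −x^{i}·[r]_x [r−i]_x (x − x^{−1})/[i]_x and lim_{z→x^{−i}} (z − x^{−i})·Δ_i(z) = x^{−i}·[r]_x [r−i]_x (x − x^{−1})/[i]_x. (These are the precise analytic content of the paper's formal-distribution identity Δ_i(z) − Δ_i(z^{−1}) = ([r]_x[r−i]_x/[i]_x)(x − x^{−1})(δ(x^{−i}z) − δ(x^{i}z)).) -/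
open Filter Topology

lemma xp_ne (x : ℝ) (hx0 : 0 < x) (t : ℝ) : xp x t ≠ 0 := by
  simp [xp, Complex.ofReal_ne_zero, (Real.rpow_pos_of_pos hx0 t).ne']

lemma xp_mul (x : ℝ) (hx0 : 0 < x) (s t : ℝ) : xp x s * xp x t = xp x (s + t) := by
  simp [xp, ← Complex.ofReal_mul, ← Real.rpow_add hx0]

lemma xp_neg (x : ℝ) (hx0 : 0 < x) (t : ℝ) : xp x (-t) = (xp x t)⁻¹ := by
  simp [xp, Real.rpow_neg hx0.le]

lemma qreal1 (x a b : ℝ) (hx0 : x ≠ 0) (hx : x - x⁻¹ ≠ 0) (ha : a ≠ 0) (hb : b ≠ 0)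
    (h1 : 1 - b * b ≠ 0) (hbb : b - b⁻¹ ≠ 0) (hx2 : x * x - 1 ≠ 0) (hb2 : b * b - 1 ≠ 0) :
    -b * ((a - a⁻¹) / (x - x⁻¹) * ((a / b - (a / b)⁻¹) / (x - x⁻¹)) * (x - x⁻¹)) /
      ((b - b⁻¹) / (x - x⁻¹))
      = -b * ((1 - a * a) * (1 - a⁻¹ * a⁻¹ * (b * b))) / (1 - b * b) := by
  have e1 : x ^ 2 - 1 ≠ 0 := by rwa [sq]
  have e2 : b ^ 2 - 1 ≠ 0 := by rwa [sq]
  have e3 : 1 - b ^ 2 ≠ 0 := by rwa [sq]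
  field_simp
  ring

lemma qreal2 (x a b : ℝ) (hx0 : x ≠ 0) (hx : x - x⁻¹ ≠ 0) (ha : a ≠ 0) (hb : b ≠ 0)
    (h2 : 1 - b⁻¹ * b⁻¹ ≠ 0) (hbb : b - b⁻¹ ≠ 0) (hx2 : x * x - 1 ≠ 0) (hb2 : b * b - 1 ≠ 0) :
    b⁻¹ * ((a - a⁻¹) / (x - x⁻¹) * ((a / b - (a / b)⁻¹) / (x - x⁻¹)) * (x - x⁻¹)) /
      ((b - b⁻¹) / (x - x⁻¹))
      = -b⁻¹ * ((1 - a * a * (b⁻¹ * b⁻¹)) * (1 - a⁻¹ * a⁻¹)) / (1 - b⁻¹ * b⁻¹) := by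
  have e1 : x ^ 2 - 1 ≠ 0 := by rwa [sq]
  have e2 : b ^ 2 - 1 ≠ 0 := by rwa [sq]
  have e3 : 1 - b ^ 2 ≠ 0 := fun h => hb2 (by linear_combination -h)
  field_simp
  ring

lemma one_sub_eq_zero {a z : ℂ} (h : 1 - a * z = 0) : z = a⁻¹ :=
  eq_inv_of_mul_eq_one_left (by linear_combination -h)

/-- The analytic content of the formal-distribution identity
`Δ_i(z) - Δ_i(z⁻¹) = ([r]_x[r-i]_x/[i]_x)(x-x⁻¹)(δ(x^{-i}z) - δ(x^{i}z))`:
(i) `Δ_i(z) = Δ_i(z⁻¹)` away from `0, x^{±i}`;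
(ii) the residues of `Δ_i` at `z = x^{±i}` are `∓x^{±i}[r]_x[r-i]_x(x-x⁻¹)/[i]_x`. -/
theorem statement7 (x r : ℝ) (hx0 : 0 < x) (hx1 : x < 1) (hr : 1 < r)
    (i : ℕ) (hi : 1 ≤ i) :
    (∀ z : ℂ, z ≠ 0 → z ≠ xp x (i : ℝ) → z ≠ xp x (-(i : ℝ)) →
      Delta x r (i : ℝ) z = Delta x r (i : ℝ) z⁻¹) ∧
    Tendsto (fun z : ℂ => (z - xp x (i : ℝ)) * Delta x r (i : ℝ) z)
      (𝓝[≠] (xp x (i : ℝ)))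
      (𝓝 (((-(x ^ (i : ℝ)) * (qint x r * qint x (r - (i : ℝ)) * (x - x⁻¹)) /
        qint x (i : ℝ) : ℝ) : ℂ))) ∧
    Tendsto (fun z : ℂ => (z - xp x (-(i : ℝ))) * Delta x r (i : ℝ) z)
      (𝓝[≠] (xp x (-(i : ℝ))))
      (𝓝 (((x ^ (-(i : ℝ)) * (qint x r * qint x (r - (i : ℝ)) * (x - x⁻¹)) /
        qint x (i : ℝ) : ℝ) : ℂ))) := by
  have hxne : x ≠ 0 := hx0.ne'
  have hB : xp x (i : ℝ) ≠ 0 := xp_ne x hx0 _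
  have hA : xp x (2 * r - i) ≠ 0 := xp_ne x hx0 _
  have hA' : xp x (-(2 * r) + i) = (xp x (2 * r - i))⁻¹ := by
    rw [show -(2 * r) + (i : ℝ) = -(2 * r - i) by ring, xp_neg x hx0]
  have hB' : xp x (-(i : ℝ)) = (xp x (i : ℝ))⁻¹ := xp_neg x hx0 _
  -- real-number facts
  have hipos : (0 : ℝ) < (i : ℝ) := by exact_mod_cast hi
  have hxinv : 1 < x⁻¹ := by
    rw [lt_inv_comm₀ (by norm_num) hx0]; simpa using hx1
  have hxx : x - x⁻¹ ≠ 0 := by nlinarith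
  have hbi : x ^ (i : ℝ) < 1 := Real.rpow_lt_one hx0.le hx1 hipos
  have hbpos : 0 < x ^ (i : ℝ) := Real.rpow_pos_of_pos hx0 _
  have hbinv : 1 < (x ^ (i : ℝ))⁻¹ := by
    rw [lt_inv_comm₀ (by norm_num) hbpos]; simpa using hbi
  have hbb : x ^ (i : ℝ) - (x ^ (i : ℝ))⁻¹ ≠ 0 := by nlinarith
  have hapos : 0 < x ^ r := Real.rpow_pos_of_pos hx0 _
  have hane : x ^ r ≠ 0 := hapos.ne'
  have hbne : x ^ (i : ℝ) ≠ 0 := hbpos.ne'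
  have hqi : qint x (i : ℝ) ≠ 0 := by
    rw [qint, Real.rpow_neg hx0.le]
    exact div_ne_zero hbb hxx
  have h1s : (1 : ℝ) - x ^ (i : ℝ) * x ^ (i : ℝ) ≠ 0 := by nlinarith
  have hx2 : x * x - 1 ≠ 0 := by nlinarith
  have hb2 : x ^ (i : ℝ) * x ^ (i : ℝ) - 1 ≠ 0 := by nlinarith
  have h2s : (1 : ℝ) - (x ^ (i : ℝ))⁻¹ * (x ^ (i : ℝ))⁻¹ ≠ 0 := by nlinarith
  refine ⟨?_, ?_, ?_⟩
  · intro z hz0 hz1 hz2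
    rw [hB'] at hz2
    have h1 : 1 - xp x (i : ℝ) * z ≠ 0 := fun h => hz2 (one_sub_eq_zero h)
    have h2 : 1 - (xp x (i : ℝ))⁻¹ * z ≠ 0 := fun h =>
      hz1 ((one_sub_eq_zero h).trans (inv_inv _))
    have h3 : 1 - xp x (i : ℝ) * z⁻¹ ≠ 0 := fun h =>
      hz1 (inv_injective (one_sub_eq_zero h))
    have h4 : 1 - (xp x (i : ℝ))⁻¹ * z⁻¹ ≠ 0 := fun h =>
      hz2 (inv_injective (one_sub_eq_zero h))
    rw [Delta, Delta, hA', hB',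
      div_eq_div_iff (mul_ne_zero h1 h2) (mul_ne_zero h3 h4)]
    field_simp
    ring
  · -- residue at z = x^i
    set B := xp x (i : ℝ) with hBdef
    have key : ∀ z : ℂ, z ≠ B →
        (z - B) * Delta x r (i : ℝ) z =
        -B * ((1 - xp x (2 * r - i) * z) * (1 - xp x (-(2 * r) + i) * z)) /
          (1 - B * z) := by
      intro z hz
      have hzB : z - B ≠ 0 := sub_ne_zero.mpr hz
      have h2 : 1 - B⁻¹ * z ≠ 0 := fun h =>
        hz ((one_sub_eq_zero h).trans (inv_inv _))
      by_cases h1 : 1 - B * z = 0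
      · rw [Delta, ← hBdef, hB', h1]
        simp
      · rw [Delta, ← hBdef, hB', mul_div_assoc',
          div_eq_div_iff (mul_ne_zero h1 h2) h1]
        field_simp
        ring
    have hden : 1 - B * B ≠ 0 := by
      rw [hBdef, xp_mul x hx0]
      show (1 : ℂ) - ((x ^ ((i : ℝ) + i) : ℝ) : ℂ) ≠ 0
      rw [show (1 : ℂ) = ((1 : ℝ) : ℂ) by norm_num, ← Complex.ofReal_sub,
        Complex.ofReal_ne_zero]
      have : x ^ ((i : ℝ) + i) < 1 := Real.rpow_lt_one hx0.le hx1 (by linarith)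
      linarith
    have hcont : Tendsto (fun z : ℂ =>
        -B * ((1 - xp x (2 * r - i) * z) * (1 - xp x (-(2 * r) + i) * z)) / (1 - B * z))
        (𝓝 B)
        (𝓝 (-B * ((1 - xp x (2 * r - i) * B) * (1 - xp x (-(2 * r) + i) * B)) /
          (1 - B * B))) :=
      Tendsto.div
        (tendsto_const_nhds.mul ((tendsto_const_nhds.sub
          (tendsto_const_nhds.mul tendsto_id)).mul (tendsto_const_nhds.sub
          (tendsto_const_nhds.mul tendsto_id))))
        (tendsto_const_nhds.sub (tendsto_const_nhds.mul tendsto_id)) hden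
    have hval : -B * ((1 - xp x (2 * r - i) * B) * (1 - xp x (-(2 * r) + i) * B)) /
        (1 - B * B) =
        ((-(x ^ (i : ℝ)) * (qint x r * qint x (r - (i : ℝ)) * (x - x⁻¹)) /
          qint x (i : ℝ) : ℝ) : ℂ) := by
      rw [hBdef, xp_mul x hx0, xp_mul x hx0, xp_mul x hx0]
      simp only [xp]
      rw [show x ^ ((2 * r - (i : ℝ)) + i) = x ^ r * x ^ r by
          rw [show (2 * r - (i : ℝ)) + i = r + r by ring, Real.rpow_add hx0],
        show x ^ ((-(2 * r) + (i : ℝ)) + i)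
            = (x ^ r)⁻¹ * (x ^ r)⁻¹ * (x ^ (i : ℝ) * x ^ (i : ℝ)) by
          rw [show (-(2 * r) + (i : ℝ)) + i = -r + (-r + ((i : ℝ) + i)) by ring]
          simp only [Real.rpow_add hx0, Real.rpow_neg hx0.le]
          ring,
        show x ^ ((i : ℝ) + i) = x ^ (i : ℝ) * x ^ (i : ℝ) from Real.rpow_add hx0 _ _]
      have hreal : (-(x ^ (i : ℝ)) * (qint x r * qint x (r - (i : ℝ)) * (x - x⁻¹)) /
            qint x (i : ℝ) : ℝ)
          = -(x ^ (i : ℝ)) * ((1 - x ^ r * x ^ r) *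
              (1 - (x ^ r)⁻¹ * (x ^ r)⁻¹ * (x ^ (i : ℝ) * x ^ (i : ℝ)))) /
            (1 - x ^ (i : ℝ) * x ^ (i : ℝ)) := by
        simp only [qint, Real.rpow_sub hx0, Real.rpow_neg hx0.le]
        exact qreal1 x (x ^ r) (x ^ (i : ℝ)) hxne hxx hane hbne h1s hbb hx2 hb2
      rw [hreal]
      push_cast
      ring
    rw [← hval]
    exact (hcont.mono_left nhdsWithin_le_nhds).congr' <|
      eventually_nhdsWithin_of_forall fun z hz => (key z hz).symm
  · -- residue at z = x^{-i}
    set C := xp x (-(i : ℝ)) with hCdef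
    have hC : C ≠ 0 := xp_ne x hx0 _
    have hC' : xp x (i : ℝ) = C⁻¹ := by rw [hB', inv_inv]
    have key : ∀ z : ℂ, z ≠ C →
        (z - C) * Delta x r (i : ℝ) z =
        -C * ((1 - xp x (2 * r - i) * z) * (1 - xp x (-(2 * r) + i) * z)) /
          (1 - C * z) := by
      intro z hz
      have hzC : z - C ≠ 0 := sub_ne_zero.mpr hz
      have h2 : 1 - C⁻¹ * z ≠ 0 := fun h =>
        hz ((one_sub_eq_zero h).trans (inv_inv _))
      by_cases h1 : 1 - C * z = 0
      · rw [Delta, ← hCdef, hC', h1]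
        simp [div_zero]
      · rw [Delta, ← hCdef, hC', mul_div_assoc',
          div_eq_div_iff (mul_ne_zero h2 h1) h1]
        field_simp
        ring
    have hden : 1 - C * C ≠ 0 := by
      rw [hCdef, xp_mul x hx0]
      show (1 : ℂ) - ((x ^ (-(i : ℝ) + -(i : ℝ)) : ℝ) : ℂ) ≠ 0
      rw [show (1 : ℂ) = ((1 : ℝ) : ℂ) by norm_num, ← Complex.ofReal_sub,
        Complex.ofReal_ne_zero]
      rw [show -(i : ℝ) + -(i : ℝ) = -((i : ℝ) + i) by ring, Real.rpow_neg hx0.le]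
      have h : x ^ ((i : ℝ) + i) < 1 := Real.rpow_lt_one hx0.le hx1 (by linarith)
      have hp : 0 < x ^ ((i : ℝ) + i) := Real.rpow_pos_of_pos hx0 _
      have : 1 < (x ^ ((i : ℝ) + i))⁻¹ := by
        rw [lt_inv_comm₀ (by norm_num) hp]; simpa using h
      linarith
    have hcont : Tendsto (fun z : ℂ =>
        -C * ((1 - xp x (2 * r - i) * z) * (1 - xp x (-(2 * r) + i) * z)) / (1 - C * z))
        (𝓝 C)
        (𝓝 (-C * ((1 - xp x (2 * r - i) * C) * (1 - xp x (-(2 * r) + i) * C)) /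
          (1 - C * C))) :=
      Tendsto.div
        (tendsto_const_nhds.mul ((tendsto_const_nhds.sub
          (tendsto_const_nhds.mul tendsto_id)).mul (tendsto_const_nhds.sub
          (tendsto_const_nhds.mul tendsto_id))))
        (tendsto_const_nhds.sub (tendsto_const_nhds.mul tendsto_id)) hden
    have hval : -C * ((1 - xp x (2 * r - i) * C) * (1 - xp x (-(2 * r) + i) * C)) /
        (1 - C * C) =
        ((x ^ (-(i : ℝ)) * (qint x r * qint x (r - (i : ℝ)) * (x - x⁻¹)) /
          qint x (i : ℝ) : ℝ) : ℂ) := by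
      rw [hCdef, xp_mul x hx0, xp_mul x hx0, xp_mul x hx0]
      simp only [xp]
      rw [show x ^ ((2 * r - (i : ℝ)) + -(i : ℝ))
            = x ^ r * x ^ r * ((x ^ (i : ℝ))⁻¹ * (x ^ (i : ℝ))⁻¹) by
          rw [show (2 * r - (i : ℝ)) + -(i : ℝ) = r + (r + (-(i : ℝ) + -(i : ℝ))) by ring]
          simp only [Real.rpow_add hx0, Real.rpow_neg hx0.le]
          ring,
        show x ^ ((-(2 * r) + (i : ℝ)) + -(i : ℝ)) = (x ^ r)⁻¹ * (x ^ r)⁻¹ by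
          rw [show (-(2 * r) + (i : ℝ)) + -(i : ℝ) = -r + -r by ring]
          simp only [Real.rpow_add hx0, Real.rpow_neg hx0.le],
        show x ^ (-(i : ℝ) + -(i : ℝ)) = (x ^ (i : ℝ))⁻¹ * (x ^ (i : ℝ))⁻¹ by
          simp only [Real.rpow_add hx0, Real.rpow_neg hx0.le],
        show x ^ (-(i : ℝ)) = (x ^ (i : ℝ))⁻¹ from Real.rpow_neg hx0.le _]
      have hreal : ((x ^ (i : ℝ))⁻¹ * (qint x r * qint x (r - (i : ℝ)) * (x - x⁻¹)) /
            qint x (i : ℝ) : ℝ)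
          = -(x ^ (i : ℝ))⁻¹ * ((1 - x ^ r * x ^ r * ((x ^ (i : ℝ))⁻¹ * (x ^ (i : ℝ))⁻¹)) *
              (1 - (x ^ r)⁻¹ * (x ^ r)⁻¹)) /
            (1 - (x ^ (i : ℝ))⁻¹ * (x ^ (i : ℝ))⁻¹) := by
        simp only [qint, Real.rpow_sub hx0, Real.rpow_neg hx0.le]
        exact qreal2 x (x ^ r) (x ^ (i : ℝ)) hxne hxx hane hbne h2s hbb hx2 hb2
      rw [hreal]
      push_cast
      ring
    rw [← hval]
    exact (hcont.mono_left nhdsWithin_le_nhds).congr' <|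
      eventually_nhdsWithin_of_forall fun z hz => (key z hz).symm
end
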